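/- For the modified Dyck path higher q,t-Catalan numbers, lim_{n→∞} q^{m·C(n,2)} DC_n^{(m)}(t, q^{-1}) = Π_{i≥1} 1/(1 − t q^i) = Σ_{λ ∈ Par} q^{|λ|} t^{ℓ(λ)}, where the limit is taken coefficientwise in the formal power series ring in q and t. -/

import Mathlib

/-- `ccount n x u` is the number of heights `w < n` at which the path `x` is weakly
left of the vertical line at `u`. -/
def ccount (n : ℕ) (x : ℕ → ℕ) (u : ℕ) : ℕ :=
  ((Finset.range n).filter (fun w => x w ≤ u)).card

/-- History of the heights reached by the bounce path: `bounceHist n m x i j` is the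
height `H_{i-j}` reached after `i - j` north moves of the bounce path (`0` if `j ≥ i`).
The recurrence is `H_{i+1} = ccount n x u_i` where `u_i = H_i + H_{i-1} + ⋯ + H_{i-m+1}`
is the `x`-coordinate of the bounce path after `i` bounces. -/
def bounceHist (n m : ℕ) (x : ℕ → ℕ) : ℕ → ℕ → ℕ
  | 0 => fun _ => 0
  | i + 1 => fun j =>
      if j = 0 then ccount n x (∑ k ∈ Finset.range m, bounceHist n m x i k)
      else bounceHist n m x i (j - 1)

/-- `H_i`, the height of the bounce path after `i` north moves. -/
def bounceH (n m : ℕ) (x : ℕ → ℕ) (i : ℕ) : ℕ := bounceHist n m x i 0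

/-- The `m`-bounce statistic `b_m(π) = Σ_k k·v_k` with `v_k = H_{k+1} - H_k`. -/
noncomputable def bounceStat (n m : ℕ) (x : ℕ → ℕ) : ℕ :=
  ∑ᶠ k, k * (bounceH n m x (k + 1) - bounceH n m x k)

/-- `m`-Dyck paths of order `n`, encoded by the monotone function `x` giving the
`x`-coordinate of the north step at each height; `x` is normalized to `m·n` above
height `n`. -/
def DyckSet (m n : ℕ) : Set (ℕ → ℕ) :=
  {x | Monotone x ∧ (∀ v, v < n → x v ≤ m * v) ∧ ∀ v, n ≤ v → x v = m * n}

/-- The topology of coefficientwise convergence on `ℚ[[q,t]]`. -/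
noncomputable instance : TopologicalSpace (MvPowerSeries (Fin 2) ℚ) :=
  inferInstanceAs (TopologicalSpace ((Fin 2 →₀ ℕ) → ℚ))

/-- `lim_{n→∞} q^{m·C(n,2)} DC_n^{(m)}(t, q⁻¹) = Π_{i≥1} (1 - t q^i)⁻¹
  = Σ_{λ ∈ Par} q^{|λ|} t^{ℓ(λ)}`: coefficientwise, the number of `m`-Dyck paths of
order `n` with `area^c = a` and bounce `b` stabilizes, for `n` large, at the number of
partitions of `a` with `b` parts, and the resulting power series is the infinite
product. -/

lemma bounceHist_eq (n m : ℕ) (x : ℕ → ℕ) (i j : ℕ) :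
    bounceHist n m x i j = bounceH n m x (i - j) := by
  induction i generalizing j with
  | zero => simp [bounceHist, bounceH]
  | succ i ih =>
    rcases Nat.eq_zero_or_pos j with rfl | hj
    · rfl
    · have h1 : bounceHist n m x (i+1) j = bounceHist n m x i (j-1) := by
        simp only [bounceHist]
        rw [if_neg (by omega)]
      rw [h1, ih]
      congr 1
      omega

lemma bounceH_one (n m : ℕ) (x : ℕ → ℕ) : bounceH n m x 1 = ccount n x 0 := by
  show bounceHist n m x 1 0 = _
  simp only [bounceHist, if_pos]
  congr 1
  exact Finset.sum_eq_zero fun k _ => rfl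

lemma bounceH_succ (n m : ℕ) (x : ℕ → ℕ) (i : ℕ) :
    bounceH n m x (i+1) = ccount n x (∑ k ∈ Finset.range m, bounceHist n m x i k) := by
  show bounceHist n m x (i+1) 0 = _
  simp only [bounceHist, if_pos]

lemma bounce_eq (n m a : ℕ) (hm : 0 < m) (x : ℕ → ℕ)
    (hsum : ∑ v ∈ Finset.range n, x v = a) (hn : 2*a + 2 ≤ n) :
    bounceStat n m x = n - ccount n x 0 := by
  have hxa : ∀ w, w < n → x w ≤ a := by
    intro w hw
    rw [← hsum]
    exact Finset.single_le_sum (fun v _ => Nat.zero_le (x v)) (Finset.mem_range.2 hw)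
  have hfull : ∀ u, a ≤ u → ccount n x u = n := by
    intro u hu
    unfold ccount
    rw [Finset.filter_true_of_mem (fun w hw => le_trans (hxa w (Finset.mem_range.1 hw)) hu),
      Finset.card_range]
  have hc0 : n - a ≤ ccount n x 0 := by
    have hsplit := Finset.card_filter_add_card_filter_not
      (s := Finset.range n) (p := fun w => x w ≤ 0)
    have hneg : ((Finset.range n).filter (fun w => ¬ x w ≤ 0)).card ≤ a := by
      calc ((Finset.range n).filter (fun w => ¬ x w ≤ 0)).card
          ≤ ∑ w ∈ (Finset.range n).filter (fun w => ¬ x w ≤ 0), x w := by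
            rw [Finset.card_eq_sum_ones]
            exact Finset.sum_le_sum fun w hw => by
              have := (Finset.mem_filter.1 hw).2
              omega
        _ ≤ ∑ w ∈ Finset.range n, x w :=
            Finset.sum_le_sum_of_subset (Finset.filter_subset _ _)
        _ = a := hsum
    unfold ccount
    rw [Finset.card_range] at hsplit
    have hof : ((Finset.range n).filter (fun w => x w ≤ 0)).card
        = (Finset.filter (fun w => x w ≤ 0) (Finset.range n)).card := by convert rfl using 3
    omega
  have h2 : bounceH n m x 2 = n := by
    rw [bounceH_succ]
    apply hfull
    calc a ≤ ccount n x 0 := by omega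
      _ = bounceHist n m x 1 0 := (bounceH_one n m x).symm
      _ ≤ ∑ k ∈ Finset.range m, bounceHist n m x 1 k :=
          Finset.single_le_sum (fun k _ => Nat.zero_le _) (Finset.mem_range.2 hm)
  have hge : ∀ i, 2 ≤ i → bounceH n m x i = n := by
    intro i hi
    induction i, hi using Nat.le_induction with
    | base => exact h2
    | succ i hi ih =>
      rw [bounceH_succ]
      apply hfull
      calc a ≤ n := by omega
        _ = bounceHist n m x i 0 := ih.symm
        _ ≤ ∑ k ∈ Finset.range m, bounceHist n m x i k :=
          Finset.single_le_sum (fun k _ => Nat.zero_le _) (Finset.mem_range.2 hm)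
  unfold bounceStat
  rw [finsum_eq_single _ 1]
  · rw [h2, bounceH_one, one_mul]
  · intro k hk
    rcases Nat.eq_zero_or_pos k with rfl | hk1
    · exact zero_mul _
    · have hk2 : 2 ≤ k := by omega
      rw [hge k hk2, hge (k+1) (by omega)]
      simp

/-- The list of an `m`-Dyck path corresponding to a partition. -/
def pList (n : ℕ) {a : ℕ} (μ : Nat.Partition a) : List ℕ :=
  List.replicate (n - Multiset.card μ.parts) 0 ++ μ.parts.sort (· ≤ ·)

def toPath (m n : ℕ) {a : ℕ} (μ : Nat.Partition a) : ℕ → ℕ :=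
  fun v => if v < n then (pList n μ).getD v 0 else m * n

lemma parts_card_le {a : ℕ} (μ : Nat.Partition a) : Multiset.card μ.parts ≤ a := by
  have h1 : Multiset.card μ.parts = (μ.parts.map (fun _ => 1)).sum := by
    simp
  have h2 : (μ.parts.map (fun _ => 1)).sum ≤ (μ.parts.map id).sum := by
    apply Multiset.sum_map_le_sum_map
    intro i hi
    exact μ.parts_pos hi
  rw [Multiset.map_id] at h2
  rw [μ.parts_sum] at h2
  omega

lemma parts_le {a : ℕ} (μ : Nat.Partition a) (p : ℕ) (hp : p ∈ μ.parts) : p ≤ a := by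
  have := Multiset.single_le_sum (fun y _ => Nat.zero_le y) p hp
  rw [μ.parts_sum] at this
  exact this

lemma pList_length (n : ℕ) {a : ℕ} (μ : Nat.Partition a) (hn : a ≤ n) :
    (pList n μ).length = n := by
  have := parts_card_le μ
  simp [pList, Multiset.length_sort]
  omega

lemma pList_sorted (n : ℕ) {a : ℕ} (μ : Nat.Partition a) : (pList n μ).Pairwise (· ≤ ·) := by
  rw [pList, List.pairwise_append]
  refine ⟨?_, Multiset.pairwise_sort _ _, ?_⟩
  · exact List.pairwise_replicate.2 (Or.inr le_rfl)
  · intro u hu v hv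
    rw [List.eq_of_mem_replicate hu]
    exact Nat.zero_le v

lemma pList_mem_le (n : ℕ) {a : ℕ} (μ : Nat.Partition a) (c : ℕ) (hc : c ∈ pList n μ) :
    c ≤ a := by
  rw [pList, List.mem_append] at hc
  rcases hc with hc | hc
  · rw [List.eq_of_mem_replicate hc]; exact Nat.zero_le a
  · exact parts_le μ c (Multiset.mem_sort _ |>.1 hc)

lemma pList_coe (n : ℕ) {a : ℕ} (μ : Nat.Partition a) :
    (pList n μ : Multiset ℕ) =
      Multiset.replicate (n - Multiset.card μ.parts) 0 + μ.parts := by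
  rw [pList]
  rw [← Multiset.coe_add, Multiset.coe_replicate, Multiset.sort_eq]

lemma sum_getD (l : List ℕ) : ∑ i ∈ Finset.range l.length, l.getD i 0 = l.sum := by
  induction l with
  | nil => rfl
  | cons c l ih =>
    rw [List.length_cons, Finset.sum_range_succ', List.sum_cons]
    simp only [List.getD_cons_succ, List.getD_cons_zero]
    rw [ih]
    omega

lemma toPath_lt (m n : ℕ) {a : ℕ} (μ : Nat.Partition a) (v : ℕ) (hv : v < n) :
    toPath m n μ v = (pList n μ).getD v 0 := if_pos hv

lemma toPath_ge (m n : ℕ) {a : ℕ} (μ : Nat.Partition a) (v : ℕ) (hv : ¬ v < n) :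
    toPath m n μ v = m * n := if_neg hv

lemma toPath_mono (m n : ℕ) (hm : 0 < m) {a : ℕ} (μ : Nat.Partition a) (hn : a ≤ n) :
    Monotone (toPath m n μ) := by
  intro v w hvw
  by_cases hw : w < n
  · have hv : v < n := lt_of_le_of_lt hvw hw
    rw [toPath_lt m n μ v hv, toPath_lt m n μ w hw]
    have hL := pList_length n μ hn
    rw [List.getD_eq_getElem _ _ (by omega), List.getD_eq_getElem _ _ (by omega)]
    have := (pList_sorted n μ).rel_get_of_le (a := ⟨v, by omega⟩) (b := ⟨w, by omega⟩)
      (by simpa using hvw)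
    simpa using this
  · rw [toPath_ge m n μ w hw]
    by_cases hv : v < n
    · rw [toPath_lt m n μ v hv]
      have hL := pList_length n μ hn
      rw [List.getD_eq_getElem _ _ (by omega)]
      have hmem := List.getElem_mem (l := pList n μ) (n := v) (by omega)
      have := pList_mem_le n μ _ hmem
      calc (pList n μ)[v] ≤ a := this
        _ ≤ n := hn
        _ ≤ m * n := Nat.le_mul_of_pos_left n hm
    · rw [toPath_ge m n μ v hv]

lemma toPath_zero (m n : ℕ) {a : ℕ} (μ : Nat.Partition a) (v : ℕ) (hn : a ≤ n)
    (hv : v < n - Multiset.card μ.parts) : toPath m n μ v = 0 := by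
  have hk := parts_card_le μ
  rw [toPath_lt m n μ v (by omega), pList, List.getD_append _ _ _ _ (by simpa using hv)]
  rw [List.getD_eq_getElem _ _ (by simpa using hv)]
  simp

lemma toPath_pos (m n : ℕ) {a : ℕ} (μ : Nat.Partition a) (v : ℕ) (hn : a ≤ n)
    (hv1 : n - Multiset.card μ.parts ≤ v) (hv2 : v < n) : 0 < toPath m n μ v := by
  have hk := parts_card_le μ
  rw [toPath_lt m n μ v hv2, pList,
    List.getD_append_right _ _ _ _ (by simpa using hv1)]
  have hlen : v - (List.replicate (n - Multiset.card μ.parts) 0).length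
      < (μ.parts.sort (· ≤ ·)).length := by
    simp only [List.length_replicate, Multiset.length_sort]
    omega
  rw [List.getD_eq_getElem _ _ hlen]
  apply μ.parts_pos
  rw [← Multiset.mem_sort (· ≤ ·)]
  exact List.getElem_mem hlen

lemma toPath_le_mv (m n : ℕ) (hm : 0 < m) {a : ℕ} (μ : Nat.Partition a)
    (hn : 2*a + 2 ≤ n) (v : ℕ) (hv : v < n) : toPath m n μ v ≤ m * v := by
  have hk := parts_card_le μ
  by_cases hz : v < n - Multiset.card μ.parts
  · rw [toPath_zero m n μ v (by omega) hz]
    exact Nat.zero_le _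
  · have hval : toPath m n μ v ≤ a := by
      rw [toPath_lt m n μ v hv]
      have hL := pList_length n μ (by omega)
      rw [List.getD_eq_getElem _ _ (by omega)]
      exact pList_mem_le n μ _ (List.getElem_mem (by omega))
    have hav : a ≤ v := by omega
    calc toPath m n μ v ≤ a := hval
      _ ≤ v := hav
      _ ≤ m * v := Nat.le_mul_of_pos_left v hm

lemma toPath_sum (m n : ℕ) {a : ℕ} (μ : Nat.Partition a) (hn : a ≤ n) :
    ∑ v ∈ Finset.range n, toPath m n μ v = a := by
  have h1 : ∑ v ∈ Finset.range n, toPath m n μ v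
      = ∑ v ∈ Finset.range n, (pList n μ).getD v 0 :=
    Finset.sum_congr rfl fun v hv => toPath_lt m n μ v (Finset.mem_range.1 hv)
  rw [h1]
  have h4 := sum_getD (pList n μ)
  rw [pList_length n μ hn] at h4
  rw [h4, pList, List.sum_append]
  have h2 : (List.replicate (n - Multiset.card μ.parts) 0).sum = 0 := by simp
  have h3 : (μ.parts.sort (· ≤ ·)).sum = μ.parts.sum := by
    conv_rhs => rw [← Multiset.sort_eq μ.parts (· ≤ ·)]
    rw [Multiset.sum_coe]
  rw [h2, h3, μ.parts_sum, zero_add]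

lemma toPath_ccount (m n : ℕ) {a : ℕ} (μ : Nat.Partition a) (hn : a ≤ n) :
    ccount n (toPath m n μ) 0 = n - Multiset.card μ.parts := by
  unfold ccount
  have hk := parts_card_le μ
  have : (Finset.range n).filter (fun w => toPath m n μ w ≤ 0)
      = Finset.range (n - Multiset.card μ.parts) := by
    ext w
    simp only [Finset.mem_filter, Finset.mem_range]
    constructor
    · rintro ⟨hw, hle⟩
      by_contra hc
      have := toPath_pos m n μ w hn (by omega) hw
      omega
    · intro hw
      exact ⟨by omega, by rw [toPath_zero m n μ w hn hw]⟩
  rw [this, Finset.card_range]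

lemma filter_pos_replicate (c : ℕ) : Multiset.filter (fun q => 0 < q) (Multiset.replicate c 0) = 0 := by
  apply Multiset.eq_zero_of_forall_notMem
  intro q hq
  rw [Multiset.mem_filter] at hq
  have := Multiset.eq_of_mem_replicate hq.1
  omega

lemma toPath_inj (m n : ℕ) {a : ℕ} (hn : a ≤ n) (μ ν : Nat.Partition a)
    (h : toPath m n μ = toPath m n ν) : μ = ν := by
  have hL : pList n μ = pList n ν := by
    apply List.ext_getElem (by rw [pList_length n μ hn, pList_length n ν hn])
    intro i h1 h2
    have hi : i < n := by rw [pList_length n μ hn] at h1; exact h1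
    have := congrFun h i
    rw [toPath_lt m n μ i hi, toPath_lt m n ν i hi,
      List.getD_eq_getElem _ _ h1, List.getD_eq_getElem _ _ h2] at this
    exact this
  have hcoe : Multiset.replicate (n - Multiset.card μ.parts) 0 + μ.parts
      = Multiset.replicate (n - Multiset.card ν.parts) 0 + ν.parts := by
    rw [← pList_coe n μ, ← pList_coe n ν, hL]
  have hf := congrArg (Multiset.filter (fun q => 0 < q)) hcoe
  rw [Multiset.filter_add, Multiset.filter_add, filter_pos_replicate, filter_pos_replicate,
    Multiset.filter_eq_self.2 (fun p hp => μ.parts_pos hp),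
    Multiset.filter_eq_self.2 (fun p hp => ν.parts_pos hp), zero_add, zero_add] at hf
  exact Nat.Partition.ext hf

lemma toPath_surj (m n a : ℕ) (hm : 0 < m) (hn : 2*a + 2 ≤ n) (x : ℕ → ℕ)
    (hx : x ∈ DyckSet m n) (hsum : ∑ v ∈ Finset.range n, x v = a) :
    ∃ μ : Nat.Partition a,
      Multiset.card μ.parts = n - ccount n x 0 ∧ toPath m n μ = x := by
  obtain ⟨hmono, hle, htop⟩ := hx
  have hxa : ∀ w, w < n → x w ≤ a := by
    intro w hw
    rw [← hsum]
    exact Finset.single_le_sum (fun v _ => Nat.zero_le (x v)) (Finset.mem_range.2 hw)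
  set M : Multiset ℕ := Multiset.map x (Finset.range n).val with hM
  set P : Multiset ℕ := Multiset.filter (fun c => ¬ c ≤ 0) M with hP
  have hMsum : M.sum = a := hsum
  have hPsum : P.sum = a := by
    have hsplit := Multiset.filter_add_not (fun c => c ≤ 0) M
    have h0 : (Multiset.filter (fun c => c ≤ 0) M).sum = 0 := by
      apply Multiset.sum_eq_zero
      intro q hq
      rw [Multiset.mem_filter] at hq
      omega
    have := congrArg Multiset.sum hsplit
    rw [Multiset.sum_add, h0, zero_add] at this
    rw [← hP] at this
    rw [this, hMsum]
  refine ⟨⟨P, ?_, hPsum⟩, ?_, ?_⟩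
  · intro q hq
    rw [hP, Multiset.mem_filter] at hq
    omega
  · show Multiset.card P = n - ccount n x 0
    have hsplit := Multiset.filter_add_not (fun c => c ≤ 0) M
    have hcards := congrArg Multiset.card hsplit
    rw [Multiset.card_add] at hcards
    have hMcard : Multiset.card M = n := by
      rw [hM, Multiset.card_map]
      simp
    have hzc : Multiset.card (Multiset.filter (fun c => c ≤ 0) M) = ccount n x 0 := by
      rw [hM, Multiset.filter_map]
      rw [Multiset.card_map]
      show Multiset.card (Multiset.filter ((fun c => c ≤ 0) ∘ x) (Finset.range n).val)
        = ((Finset.range n).filter (fun w => x w ≤ 0)).card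
      rw [← Finset.filter_val]
      congr 1
    rw [← hP, hzc, hMcard] at hcards
    omega
  · -- toPath = x
    funext v
    rcases Nat.lt_or_ge v n with hv | hv
    · have hkP : Multiset.card P ≤ a := parts_card_le ⟨P, by
        intro q hq; rw [hP, Multiset.mem_filter] at hq; omega, hPsum⟩
      rw [toPath_lt _ _ _ v hv]
      have hBlen : ((List.range n).map x).length = n := by simp
      have hList : pList n ⟨P, by intro q hq; rw [hP, Multiset.mem_filter] at hq; omega,
          hPsum⟩ = (List.range n).map x := by
        refine (fun hp h1 h2 => List.Perm.eq_of_pairwise' (r := (· ≤ ·)) h1 h2 hp) ?_ ?_ ?_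
        · rw [← Multiset.coe_eq_coe]
          rw [pList_coe]
          show Multiset.replicate (n - Multiset.card P) 0 + P = _
          have hBcoe : (((List.range n).map x : List ℕ) : Multiset ℕ) = M := by
            rw [hM]
            rfl
          rw [hBcoe]
          have hsplit := Multiset.filter_add_not (fun c => c ≤ 0) M
          have hrep : Multiset.filter (fun c => c ≤ 0) M
              = Multiset.replicate (n - Multiset.card P) 0 := by
            rw [Multiset.eq_replicate]
            constructor
            · have hcards := congrArg Multiset.card (Multiset.filter_add_not (fun c => c ≤ 0) M)
              rw [Multiset.card_add] at hcards
              have hMcard : Multiset.card M = n := by rw [hM, Multiset.card_map]; simp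
              rw [← hP] at hcards
              omega
            · intro q hq
              rw [Multiset.mem_filter] at hq
              omega
          rw [← hrep]
          exact hsplit
        · exact pList_sorted n _
        · show List.Pairwise (· ≤ ·) _
          rw [List.pairwise_map]
          exact (List.pairwise_lt_range (n := n)).imp fun h => hmono (le_of_lt h)
      rw [hList, List.getD_eq_getElem _ _ (by omega)]
      simp
    · rw [toPath_ge _ _ _ v (by omega), htop v hv]

lemma part1 (m : ℕ) (hm : 0 < m) (a b n : ℕ) (hn : 2*a + 2 ≤ n) :
    Set.ncard {x : ℕ → ℕ | x ∈ DyckSet m n ∧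
        (∑ v ∈ Finset.range n, x v) = a ∧ bounceStat n m x = b}
    = Fintype.card {μ : Nat.Partition a // μ.parts.card = b} := by
  classical
  have hc0 : ∀ x : ℕ → ℕ, ccount n x 0 ≤ n := fun x =>
    le_trans (Finset.card_filter_le _ _) (le_of_eq (Finset.card_range n))
  have him : {x : ℕ → ℕ | x ∈ DyckSet m n ∧
        (∑ v ∈ Finset.range n, x v) = a ∧ bounceStat n m x = b}
      = toPath m n '' {μ : Nat.Partition a | Multiset.card μ.parts = b} := by
    ext x
    constructor
    · rintro ⟨hxd, hsum, hb⟩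
      obtain ⟨μ, hcard, hxeq⟩ := toPath_surj m n a hm hn x hxd hsum
      have hbe := bounce_eq n m a hm x hsum hn
      refine ⟨μ, ?_, hxeq⟩
      show Multiset.card μ.parts = b
      omega
    · rintro ⟨μ, hμ, rfl⟩
      have hμb : Multiset.card μ.parts = b := hμ
      have hka := parts_card_le μ
      have hsum := toPath_sum m n μ (by omega)
      refine ⟨⟨toPath_mono m n hm μ (by omega), fun v hv => toPath_le_mv m n hm μ hn v hv,
        fun v hv => toPath_ge m n μ v (by omega)⟩, hsum, ?_⟩
      rw [bounce_eq n m a hm _ hsum hn, toPath_ccount m n μ (by omega)]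
      omega
  rw [him, Set.ncard_image_of_injOn (fun μ _ ν _ h => toPath_inj m n (by omega) μ ν h)]
  rw [Set.ncard_eq_toFinset_card', Set.toFinset_card]
  apply Fintype.card_congr
  exact Equiv.subtypeEquivRight fun μ => Iff.rfl

open MvPowerSeries Finsupp in

/-- number of partitions of `a` with `b` parts, all parts of form `i+1` with `i ∈ s`. -/
def pcount (s : Finset ℕ) (a b : ℕ) : ℕ :=
  Fintype.card {μ : Nat.Partition a // μ.parts.card = b ∧ ∀ p ∈ μ.parts, ∃ i ∈ s, p = i + 1}

noncomputable def Pser (s : Finset ℕ) : MvPowerSeries (Fin 2) ℚ :=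
  fun e => (pcount s (e 0) (e 1) : ℚ)

lemma Pser_coeff (s : Finset ℕ) (e : Fin 2 →₀ ℕ) :
    MvPowerSeries.coeff e (Pser s) = (pcount s (e 0) (e 1) : ℚ) := rfl

lemma pcount_stab (s : Finset ℕ) (a b : ℕ) (hs : Finset.range a ⊆ s) :
    pcount s a b = Fintype.card {μ : Nat.Partition a // μ.parts.card = b} := by
  apply Fintype.card_congr
  apply Equiv.subtypeEquivRight
  intro μ
  constructor
  · exact fun h => h.1
  · intro h
    refine ⟨h, fun p hp => ?_⟩
    have hp1 : 1 ≤ p := μ.parts_pos hp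
    have hpa : p ≤ a := by
      have := Multiset.single_le_sum (fun x _ => Nat.zero_le x) p hp
      rw [μ.parts_sum] at this; omega
    exact ⟨p - 1, hs (Finset.mem_range.2 (by omega)), by omega⟩

lemma e_eq_zero_iff (e : Fin 2 →₀ ℕ) : e = 0 ↔ e 0 = 0 ∧ e 1 = 0 := by
  constructor
  · intro h; simp [h]
  · rintro ⟨h0, h1⟩
    ext i
    fin_cases i
    · exact h0
    · exact h1

lemma pcount_empty (a b : ℕ) : pcount ∅ a b = if a = 0 ∧ b = 0 then 1 else 0 := by
  unfold pcount
  split_ifs with h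
  · obtain ⟨ha, hb⟩ := h
    subst ha hb
    rw [Fintype.card_eq_one_iff]
    refine ⟨⟨default, ?_, ?_⟩, ?_⟩
    · simp
    · simp
    · intro y; apply Subtype.ext; apply Subsingleton.elim
  · rw [Fintype.card_eq_zero_iff]
    constructor
    rintro ⟨μ, hcard, hmem⟩
    have : μ.parts = 0 := by
      apply Multiset.eq_zero_of_forall_notMem
      intro p hp
      obtain ⟨i, hi, -⟩ := hmem p hp
      exact absurd hi (Finset.notMem_empty i)
    have hsum := μ.parts_sum
    rw [this] at hsum hcard
    simp at hsum hcard
    exact h ⟨hsum.symm, hcard.symm⟩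

lemma Pser_empty : Pser ∅ = 1 := by
  ext e
  rw [Pser_coeff, MvPowerSeries.coeff_one, pcount_empty]
  by_cases h : e = 0
  · rw [if_pos h, if_pos ((e_eq_zero_iff e).1 h)]; norm_num
  · rw [if_neg h, if_neg (fun hc => h ((e_eq_zero_iff e).2 hc))]; norm_num

lemma card_split {α : Type*} [Fintype α] (C Q : α → Prop) [DecidablePred C] [DecidablePred Q] :
    Fintype.card {x // C x} =
      Fintype.card {x // C x ∧ Q x} + Fintype.card {x // C x ∧ ¬ Q x} := by
  rw [Fintype.card_subtype, Fintype.card_subtype, Fintype.card_subtype,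
    ← Finset.filter_filter, ← Finset.filter_filter]
  exact (Finset.card_filter_add_card_filter_not (s := Finset.univ.filter C)
    (p := Q)).symm

lemma card_mem_case (j : ℕ) (s : Finset ℕ) (a b : ℕ) (hja : j + 1 ≤ a) (hb : 1 ≤ b) :
    Fintype.card {μ : Nat.Partition a //
      (μ.parts.card = b ∧ ∀ p ∈ μ.parts, ∃ i ∈ insert j s, p = i + 1) ∧ (j+1) ∈ μ.parts}
    = pcount (insert j s) (a - (j+1)) (b-1) := by
  unfold pcount
  apply Fintype.card_congr
  refine
    { toFun := fun x => ⟨⟨x.1.parts.erase (j+1), ?_, ?_⟩, ?_, ?_⟩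
      invFun := fun y => ⟨⟨(j+1) ::ₘ y.1.parts, ?_, ?_⟩, ⟨?_, ?_⟩, ?_⟩
      left_inv := fun x => Subtype.ext (Nat.Partition.ext (Multiset.cons_erase x.2.2))
      right_inv := fun y => Subtype.ext (Nat.Partition.ext (Multiset.erase_cons_head _ _)) }
  · intro p hp
    exact x.1.parts_pos (Multiset.mem_of_mem_erase hp)
  · have hc := Multiset.cons_erase x.2.2
    have hs := x.1.parts_sum
    rw [← hc, Multiset.sum_cons] at hs
    omega
  · have := Multiset.card_erase_of_mem x.2.2
    rw [x.2.1.1] at this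
    simpa using this
  · exact fun p hp => x.2.1.2 p (Multiset.mem_of_mem_erase hp)
  · intro p hp
    rcases Multiset.mem_cons.1 hp with rfl | hp
    · omega
    · exact y.1.parts_pos hp
  · rw [Multiset.sum_cons, y.1.parts_sum]; omega
  · show Multiset.card ((j+1) ::ₘ y.1.parts) = b
    rw [Multiset.card_cons, y.2.1]; omega
  · intro p hp
    rcases Multiset.mem_cons.1 hp with rfl | hp
    · exact ⟨j, Finset.mem_insert_self _ _, rfl⟩
    · exact y.2.2 p hp
  · exact Multiset.mem_cons_self _ _

lemma pcount_insert (j : ℕ) (s : Finset ℕ) (hj : j ∉ s) (a b : ℕ) :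
    pcount (insert j s) a b =
      pcount s a b +
        if j + 1 ≤ a ∧ 1 ≤ b then pcount (insert j s) (a - (j+1)) (b-1) else 0 := by
  classical
  unfold pcount
  rw [card_split (Q := fun μ : Nat.Partition a => (j+1) ∈ μ.parts)
    (C := fun μ : Nat.Partition a =>
      μ.parts.card = b ∧ ∀ p ∈ μ.parts, ∃ i ∈ insert j s, p = i + 1)]
  have hnotin : Fintype.card {μ : Nat.Partition a //
      (μ.parts.card = b ∧ ∀ p ∈ μ.parts, ∃ i ∈ insert j s, p = i + 1) ∧ (j+1) ∉ μ.parts}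
      = Fintype.card {μ : Nat.Partition a //
        μ.parts.card = b ∧ ∀ p ∈ μ.parts, ∃ i ∈ s, p = i + 1} := by
    apply Fintype.card_congr
    apply Equiv.subtypeEquivRight
    intro μ
    constructor
    · rintro ⟨⟨hcard, hmem⟩, hnot⟩
      refine ⟨hcard, fun p hp => ?_⟩
      obtain ⟨i, hi, rfl⟩ := hmem p hp
      rcases Finset.mem_insert.1 hi with rfl | hi
      · exact absurd hp hnot
      · exact ⟨i, hi, rfl⟩
    · rintro ⟨hcard, hmem⟩
      refine ⟨⟨hcard, fun p hp => ?_⟩, fun hin => ?_⟩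
      · obtain ⟨i, hi, rfl⟩ := hmem p hp
        exact ⟨i, Finset.mem_insert_of_mem hi, rfl⟩
      · obtain ⟨i, hi, hieq⟩ := hmem _ hin
        have : i = j := by omega
        subst this
        exact hj hi
  rw [hnotin]
  by_cases hab : j + 1 ≤ a ∧ 1 ≤ b
  · rw [if_pos hab, card_mem_case j s a b hab.1 hab.2]
    unfold pcount
    omega
  · rw [if_neg hab, Nat.add_zero]
    have hz : Fintype.card {μ : Nat.Partition a //
        (μ.parts.card = b ∧ ∀ p ∈ μ.parts, ∃ i ∈ insert j s, p = i + 1) ∧ (j+1) ∈ μ.parts}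
        = 0 := by
      rw [Fintype.card_eq_zero_iff]
      constructor
      rintro ⟨μ, ⟨hcard, hmem⟩, hin⟩
      have h1 : j + 1 ≤ μ.parts.sum :=
        Multiset.single_le_sum (fun x _ => Nat.zero_le x) _ hin
      have h2 : 1 ≤ Multiset.card μ.parts := Multiset.card_pos_iff_exists_mem.2 ⟨_, hin⟩
      rw [μ.parts_sum] at h1
      omega
    omega

lemma XX_eq (j : ℕ) :
    (MvPowerSeries.X 1 * MvPowerSeries.X 0 ^ (j + 1) : MvPowerSeries (Fin 2) ℚ)
      = MvPowerSeries.monomial (Finsupp.single 1 1 + Finsupp.single 0 (j+1)) 1 := by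
  rw [MvPowerSeries.X_pow_eq, MvPowerSeries.X, MvPowerSeries.monomial_mul_monomial, one_mul]

lemma d_le_iff (j : ℕ) (e : Fin 2 →₀ ℕ) :
    Finsupp.single 1 1 + Finsupp.single 0 (j+1) ≤ e ↔ j + 1 ≤ e 0 ∧ 1 ≤ e 1 := by
  rw [Finsupp.le_iff]
  constructor
  · intro h
    constructor
    · have := h 0 (by simp)
      simpa using this
    · have := h 1 (by simp)
      simpa using this
  · rintro ⟨h0, h1⟩ i _
    fin_cases i
    · simpa using h0
    · simpa using h1

lemma Pser_rec (j : ℕ) (s : Finset ℕ) (hj : j ∉ s) :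
    Pser s = (1 - MvPowerSeries.X 1 * MvPowerSeries.X 0 ^ (j + 1)) * Pser (insert j s) := by
  ext e
  rw [sub_mul, one_mul, map_sub, XX_eq, MvPowerSeries.coeff_monomial_mul, Pser_coeff,
    Pser_coeff, pcount_insert j s hj (e 0) (e 1)]
  by_cases hd : Finsupp.single 1 1 + Finsupp.single 0 (j+1) ≤ e
  · rw [if_pos hd, if_pos ((d_le_iff j e).1 hd), one_mul, Pser_coeff]
    rw [Finsupp.tsub_apply, Finsupp.tsub_apply, Finsupp.add_apply, Finsupp.add_apply,
      Finsupp.single_apply, Finsupp.single_apply, Finsupp.single_apply, Finsupp.single_apply]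
    norm_num
  · rw [if_neg hd, if_neg (fun hc => hd ((d_le_iff j e).2 hc))]
    push_cast
    ring

lemma prod_mul_Pser (s : Finset ℕ) :
    (∏ i ∈ s, (1 - MvPowerSeries.X 1 * MvPowerSeries.X 0 ^ (i+1) :
      MvPowerSeries (Fin 2) ℚ)) * Pser s = 1 := by
  classical
  induction s using Finset.induction with
  | empty => simp [Pser_empty]
  | @insert j s hj ih =>
    rw [Finset.prod_insert hj]
    have hre : ((1 - MvPowerSeries.X 1 * MvPowerSeries.X 0 ^ (j+1)) *
        ∏ i ∈ s, (1 - MvPowerSeries.X 1 * MvPowerSeries.X 0 ^ (i+1) :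
          MvPowerSeries (Fin 2) ℚ)) * Pser (insert j s)
        = (∏ i ∈ s, (1 - MvPowerSeries.X 1 * MvPowerSeries.X 0 ^ (i+1) :
          MvPowerSeries (Fin 2) ℚ)) *
          ((1 - MvPowerSeries.X 1 * MvPowerSeries.X 0 ^ (j+1)) * Pser (insert j s)) := by
      ring
    rw [hre, ← Pser_rec j s hj, ih]

lemma fact_mul_inv (i : ℕ) :
    (1 - MvPowerSeries.X 1 * MvPowerSeries.X 0 ^ (i+1) : MvPowerSeries (Fin 2) ℚ) *
      (1 - MvPowerSeries.X 1 * MvPowerSeries.X 0 ^ (i+1) : MvPowerSeries (Fin 2) ℚ)⁻¹ = 1 := by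
  apply MvPowerSeries.mul_inv_cancel
  have : MvPowerSeries.constantCoeff
      (1 - MvPowerSeries.X 1 * MvPowerSeries.X 0 ^ (i+1) : MvPowerSeries (Fin 2) ℚ) = 1 := by
    simp [map_sub, map_mul, map_pow]
  rw [this]
  exact one_ne_zero

lemma prod_inv_eq (s : Finset ℕ) :
    (∏ i ∈ s, (1 - MvPowerSeries.X 1 * MvPowerSeries.X 0 ^ (i+1) :
      MvPowerSeries (Fin 2) ℚ)⁻¹) = Pser s := by
  have h2 : (∏ i ∈ s, (1 - MvPowerSeries.X 1 * MvPowerSeries.X 0 ^ (i+1) :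
      MvPowerSeries (Fin 2) ℚ)) * (∏ i ∈ s, (1 - MvPowerSeries.X 1 *
        MvPowerSeries.X 0 ^ (i+1) : MvPowerSeries (Fin 2) ℚ)⁻¹) = 1 := by
    rw [← Finset.prod_mul_distrib]
    exact Finset.prod_eq_one fun i _ => fact_mul_inv i
  calc (∏ i ∈ s, (1 - MvPowerSeries.X 1 * MvPowerSeries.X 0 ^ (i+1) :
      MvPowerSeries (Fin 2) ℚ)⁻¹)
      = (∏ i ∈ s, (1 - MvPowerSeries.X 1 * MvPowerSeries.X 0 ^ (i+1) :
        MvPowerSeries (Fin 2) ℚ)⁻¹) * ((∏ i ∈ s, (1 - MvPowerSeries.X 1 *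
          MvPowerSeries.X 0 ^ (i+1) : MvPowerSeries (Fin 2) ℚ)) * Pser s) := by
        rw [prod_mul_Pser, mul_one]
    _ = ((∏ i ∈ s, (1 - MvPowerSeries.X 1 * MvPowerSeries.X 0 ^ (i+1) :
        MvPowerSeries (Fin 2) ℚ)) * (∏ i ∈ s, (1 - MvPowerSeries.X 1 *
          MvPowerSeries.X 0 ^ (i+1) : MvPowerSeries (Fin 2) ℚ)⁻¹)) * Pser s := by ring
    _ = Pser s := by rw [h2, one_mul]

lemma part2 :
    ((fun e : Fin 2 →₀ ℕ =>
        (Fintype.card {μ : Nat.Partition (e 0) // μ.parts.card = e 1} : ℚ)) :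
      MvPowerSeries (Fin 2) ℚ)
    = ∏' i : ℕ,
        (1 - MvPowerSeries.X 1 * MvPowerSeries.X 0 ^ (i + 1) :
          MvPowerSeries (Fin 2) ℚ)⁻¹ := by
  haveI : T2Space (MvPowerSeries (Fin 2) ℚ) :=
    inferInstanceAs (T2Space ((Fin 2 →₀ ℕ) → ℚ))
  set F : MvPowerSeries (Fin 2) ℚ := (fun e : Fin 2 →₀ ℕ =>
      (Fintype.card {μ : Nat.Partition (e 0) // μ.parts.card = e 1} : ℚ)) with hF
  have hp : HasProd (fun i : ℕ => (1 - MvPowerSeries.X 1 * MvPowerSeries.X 0 ^ (i + 1) :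
      MvPowerSeries (Fin 2) ℚ)⁻¹) F := by
    rw [HasProd]
    apply Filter.Tendsto.congr (fun s => (prod_inv_eq s).symm)
    have : Filter.Tendsto (fun s : Finset ℕ => (Pser s : (Fin 2 →₀ ℕ) → ℚ)) Filter.atTop
        (nhds (F : (Fin 2 →₀ ℕ) → ℚ)) := by
      apply tendsto_pi_nhds.2
      intro e
      apply Filter.Tendsto.congr' _ tendsto_const_nhds
      filter_upwards [Filter.eventually_ge_atTop (Finset.range (e 0))] with s hs
      show F e = Pser s e
      rw [hF]
      show ((Fintype.card {μ : Nat.Partition (e 0) // μ.parts.card = e 1} : ℚ))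
        = (pcount s (e 0) (e 1) : ℚ)
      rw [pcount_stab s (e 0) (e 1) hs]
    exact this
  exact hp.tprod_eq.symm

theorem stmt12 (m : ℕ) (hm : 0 < m) :
    (∀ a b : ℕ, ∃ N : ℕ, ∀ n ≥ N,
      Set.ncard {x : ℕ → ℕ | x ∈ DyckSet m n ∧
          (∑ v ∈ Finset.range n, x v) = a ∧ bounceStat n m x = b}
      = Fintype.card {μ : Nat.Partition a // μ.parts.card = b}) ∧
    ((fun e : Fin 2 →₀ ℕ =>
        (Fintype.card {μ : Nat.Partition (e 0) // μ.parts.card = e 1} : ℚ)) :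
      MvPowerSeries (Fin 2) ℚ)
    = ∏' i : ℕ,
        (1 - MvPowerSeries.X 1 * MvPowerSeries.X 0 ^ (i + 1) :
          MvPowerSeries (Fin 2) ℚ)⁻¹ := by
  refine ⟨fun a b => ⟨2*a+2, fun n hn => part1 m hm a b n hn⟩, part2⟩
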